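/- Let G be a finite group acting linearly on a finite-dimensional real inner product space V with a G-invariant inner product (⟨g·u, g·v⟩ = ⟨u, v⟩ for all g, u, v). Let V_fixed = {v ∈ V : g·v = v for all g ∈ G} and let e_1,…,e_s be a basis of V_fixed. Let k ≥ 1. Then a linear map L : V^k → V^k is equivariant under both the componentwise G^k-action and the S_k coordinate-permutation action if and only if there exist a G-equivariant linear map L̂ : V → V and real numbers a_{ij} (1 ≤ i, j ≤ s) such that for every (v_1,…,v_k) ∈ V^k and every coordinate m, L(v_1,…,v_k)_m = L̂(v_m) + Σ_{i,j=1}^s a_{ij} · (Σ_{ℓ=1}^k ⟨v_ℓ, e_i⟩) · e_j. -/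

import Mathlib

open scoped RealInnerProductSpace

private lemma factor_lemma
    {G V : Type*} [Group G] [Finite G]
    [NormedAddCommGroup V] [InnerProductSpace ℝ V] [FiniteDimensional ℝ V]
    (ρ : Representation ℝ G V)
    (hinner : ∀ (g : G) (u v : V), ⟪ρ g u, ρ g v⟫ = ⟪u, v⟫)
    (s : ℕ) (e : Fin s → V)
    (he_indep : LinearIndependent ℝ e)
    (he_span : Submodule.span ℝ (Set.range e) = ρ.invariants)
    (B : V →ₗ[ℝ] V)
    (h1 : ∀ g w, B (ρ g w) = B w)
    (h2 : ∀ g w, ρ g (B w) = B w) :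
    ∃ a : Fin s → Fin s → ℝ, ∀ w, B w = ∑ i, ∑ j, a i j • (⟪w, e i⟫ • e j) := by
  have : Fintype G := Fintype.ofFinite G
  have he_mem : ∀ i, e i ∈ ρ.invariants := fun i =>
    he_span ▸ Submodule.subset_span (Set.mem_range_self i)
  have he_fix : ∀ (g : G) i, ρ g (e i) = e i := fun g i => (ρ.mem_invariants _).1 (he_mem i) g
  have hinner_e : ∀ (g : G) (w : V) i, ⟪ρ g w, e i⟫ = ⟪w, e i⟫ := by
    intro g w i
    conv_lhs => rw [← he_fix g i]
    exact hinner g w (e i)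
  set c : ℝ := (Fintype.card G : ℝ)⁻¹ with hc
  have hcard : (Fintype.card G : ℝ) ≠ 0 := Nat.cast_ne_zero.2 Fintype.card_ne_zero
  set P : V →ₗ[ℝ] V := c • ∑ g : G, (ρ g : V →ₗ[ℝ] V) with hP
  have hPapply : ∀ w, P w = c • ∑ g : G, ρ g w := by
    intro w; simp [hP, LinearMap.sum_apply]
  have hPinv : ∀ w, P w ∈ ρ.invariants := by
    intro w
    rw [ρ.mem_invariants]
    intro g
    rw [hPapply, map_smul, map_sum]
    congr 1
    calc ∑ h : G, ρ g (ρ h w) = ∑ h : G, ρ (g * h) w := by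
          simp [map_mul]
      _ = ∑ h : G, ρ h w := Equiv.sum_comp (Equiv.mulLeft g) (fun h => ρ h w)
  have hPinnerE : ∀ w i, ⟪P w, e i⟫ = ⟪w, e i⟫ := by
    intro w i
    rw [hPapply, real_inner_smul_left, sum_inner]
    simp only [hinner_e, Finset.sum_const, Finset.card_univ, nsmul_eq_mul]
    rw [hc]
    field_simp
  have hBP : ∀ w, B (P w) = B w := by
    intro w
    rw [hPapply, map_smul, map_sum]
    simp only [h1, Finset.sum_const, Finset.card_univ]
    rw [smul_comm, ← Nat.cast_smul_eq_nsmul ℝ, smul_smul, hc,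
      mul_inv_cancel₀ hcard, one_smul]
  -- Gram matrix
  set M : Matrix (Fin s) (Fin s) ℝ := Matrix.of (fun i j => ⟪e j, e i⟫) with hM
  have hmul : ∀ (x : Fin s → ℝ) i, M.mulVecLin x i = ⟪∑ j, x j • e j, e i⟫ := by
    intro x i
    rw [sum_inner]
    simp [hM, Matrix.mulVecLin, Matrix.mulVec, dotProduct, real_inner_smul_left,
      mul_comm]
  have hMinj : Function.Injective M.mulVecLin := by
    rw [← LinearMap.ker_eq_bot, LinearMap.ker_eq_bot']
    intro x hx
    have hv : (∑ j, x j • e j) = 0 := by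
      have h0 : ∀ i, ⟪∑ j, x j • e j, e i⟫ = 0 := by
        intro i; rw [← hmul x i, hx]; rfl
      have : ⟪∑ j, x j • e j, ∑ j, x j • e j⟫ = (0:ℝ) := by
        rw [inner_sum]
        simp only [real_inner_smul_right]
        refine Finset.sum_eq_zero fun i _ => ?_
        rw [h0, mul_zero]
      exact inner_self_eq_zero.mp this
    exact funext (Fintype.linearIndependent_iff.1 he_indep x hv)
  have hMsurj : Function.Surjective M.mulVecLin :=
    LinearMap.injective_iff_surjective.1 hMinj
  set Em : (Fin s → ℝ) ≃ₗ[ℝ] (Fin s → ℝ) :=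
    LinearEquiv.ofBijective M.mulVecLin ⟨hMinj, hMsurj⟩ with hEm
  -- choose coefficients of B (e i)
  have hBe : ∀ i, ∃ b : Fin s → ℝ, ∑ j, b j • e j = B (e i) := by
    intro i
    rw [← Submodule.mem_span_range_iff_exists_fun ℝ, he_span, ρ.mem_invariants]
    exact fun g => h2 g (e i)
  choose b hb using hBe
  set N : Fin s → Fin s → ℝ := fun p => Em.symm (Pi.single p 1) with hN
  refine ⟨fun p j => ∑ i, N p i * b i j, fun w => ?_⟩
  -- coefficients of P w
  have hPw : ∃ cw : Fin s → ℝ, ∑ i, cw i • e i = P w := by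
    rw [← Submodule.mem_span_range_iff_exists_fun ℝ, he_span]
    exact hPinv w
  obtain ⟨cw, hcw⟩ := hPw
  have hEmcw : M.mulVecLin cw = fun i => ⟪w, e i⟫ := by
    funext i
    rw [hmul, hcw, hPinnerE]
  have hcweq : cw = Em.symm (fun i => ⟪w, e i⟫) := by
    apply Em.injective
    rw [Em.apply_symm_apply]
    exact hEmcw
  have hsingle : (fun i => ⟪w, e i⟫) = ∑ p, (⟪w, e p⟫ : ℝ) • (Pi.single p 1 : Fin s → ℝ) := by
    funext j
    rw [Finset.sum_apply]
    simp [Pi.single_apply, eq_comm]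
  have hcwi : ∀ i, cw i = ∑ p, ⟪w, e p⟫ * N p i := by
    intro i
    rw [hcweq, hsingle, map_sum]
    simp only [map_smul]
    rw [Finset.sum_apply]
    simp only [Pi.smul_apply, smul_eq_mul, hN]
  calc B w = B (P w) := (hBP w).symm
    _ = B (∑ i, cw i • e i) := by rw [hcw]
    _ = ∑ i, cw i • B (e i) := by rw [map_sum]; simp
    _ = ∑ i, cw i • (∑ j, b i j • e j) := by simp only [hb]
    _ = ∑ i, ∑ j, ∑ p, (⟪w, e p⟫ * N p i * b i j) • e j := by
        refine Finset.sum_congr rfl fun i _ => ?_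
        rw [hcwi i, Finset.smul_sum]
        refine Finset.sum_congr rfl fun j _ => ?_
        rw [smul_smul, Finset.sum_mul, Finset.sum_smul]
    _ = ∑ p, ∑ j, (∑ i, N p i * b i j) • ((⟪w, e p⟫ : ℝ) • e j) := by
        have hrhs : ∀ p j, (∑ i, N p i * b i j) • ((⟪w, e p⟫ : ℝ) • e j)
            = ∑ i, (⟪w, e p⟫ * N p i * b i j) • e j := by
          intro p j
          rw [smul_smul, Finset.sum_mul, Finset.sum_smul]
          exact Finset.sum_congr rfl fun i _ => by ring_nf
        simp only [hrhs]
        calc ∑ i, ∑ j, ∑ p, (⟪w, e p⟫ * N p i * b i j) • e j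
            = ∑ j, ∑ i, ∑ p, (⟪w, e p⟫ * N p i * b i j) • e j :=
              Finset.sum_comm
          _ = ∑ j, ∑ p, ∑ i, (⟪w, e p⟫ * N p i * b i j) • e j :=
              Finset.sum_congr rfl fun j _ => Finset.sum_comm
          _ = ∑ p, ∑ j, ∑ i, (⟪w, e p⟫ * N p i * b i j) • e j :=
              Finset.sum_comm
    _ = ∑ i, ∑ j, (∑ p, N i p * b p j) • ((⟪w, e i⟫ : ℝ) • e j) := rfl
/-- Characterization of the wreath-equivariant linear layers
on `Vᵏ`: a linear map `L : Vᵏ → Vᵏ` commutes with the componentwise `Gᵏ`-action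
and coordinate permutations iff it is a Siamese map `L̂` plus a combination of
the `s²` non-Siamese maps built from a basis `e₁, …, e_s` of the fixed space. -/
theorem wreath_equivariant_characterization
    {G V : Type*} [Group G] [Finite G]
    [NormedAddCommGroup V] [InnerProductSpace ℝ V] [FiniteDimensional ℝ V]
    (ρ : Representation ℝ G V)
    (hinner : ∀ (g : G) (u v : V), ⟪ρ g u, ρ g v⟫ = ⟪u, v⟫)
    (s : ℕ) (e : Fin s → V)
    (he_indep : LinearIndependent ℝ e)
    (he_span : Submodule.span ℝ (Set.range e) = ρ.invariants)
    (k : ℕ) (hk : 1 ≤ k)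
    (L : (Fin k → V) →ₗ[ℝ] (Fin k → V)) :
    ((∀ (g : Fin k → G) (v : Fin k → V),
        L (fun i => ρ (g i) (v i)) = fun i => ρ (g i) (L v i)) ∧
     (∀ (τ : Equiv.Perm (Fin k)) (v : Fin k → V),
        L (fun i => v (τ⁻¹ i)) = fun i => L v (τ⁻¹ i))) ↔
    (∃ (Lhat : V →ₗ[ℝ] V) (a : Fin s → Fin s → ℝ),
      (∀ (g : G) (v : V), Lhat (ρ g v) = ρ g (Lhat v)) ∧
      ∀ (v : Fin k → V) (m : Fin k),
        L v m = Lhat (v m) + ∑ i, ∑ j, a i j • ((∑ ℓ, ⟪v ℓ, e i⟫) • e j)) := by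
  constructor
  · rintro ⟨hG, hperm⟩
    set T : Fin k → Fin k → (V →ₗ[ℝ] V) := fun m ℓ =>
      (LinearMap.proj m) ∘ₗ L ∘ₗ (LinearMap.single ℝ (fun _ : Fin k => V) ℓ) with hT
    have hTapply : ∀ m ℓ (w : V), T m ℓ w = L (Pi.single ℓ w) m := fun m ℓ w => rfl
    have hdecomp : ∀ (v : Fin k → V) m, L v m = ∑ ℓ, T m ℓ (v ℓ) := by
      intro v m
      conv_lhs => rw [← Finset.univ_sum_single v]
      rw [map_sum, Finset.sum_apply]
      rfl
    have hsingle_perm : ∀ (τ : Equiv.Perm (Fin k)) ℓ (w : V),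
        (fun i => (Pi.single ℓ w : Fin k → V) (τ⁻¹ i)) = Pi.single (τ ℓ) w := by
      intro τ ℓ w
      funext i
      by_cases h : i = τ ℓ
      · subst h
        rw [← Equiv.Perm.mul_apply, inv_mul_cancel, Equiv.Perm.one_apply, Pi.single_eq_same, Pi.single_eq_same]
      · rw [Pi.single_apply, Pi.single_apply, if_neg h, if_neg]
        intro hc
        exact h (by rw [← hc]; simp)
    have hTperm : ∀ (τ : Equiv.Perm (Fin k)) m ℓ, T (τ m) (τ ℓ) = T m ℓ := by
      intro τ m ℓ
      ext w
      have h := hperm τ (Pi.single ℓ w)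
      rw [hsingle_perm] at h
      have h2 := congrFun h (τ m)
      simp only [hTapply, LinearMap.coe_comp]
      rw [h2, ← Equiv.Perm.mul_apply, inv_mul_cancel, Equiv.Perm.one_apply]
    have hTGdiag : ∀ m (g : G) (w : V), T m m (ρ g w) = ρ g (T m m w) := by
      intro m g w
      have h := hG (fun i => if i = m then g else 1) (Pi.single m w)
      have harg : (fun i => ρ (if i = m then g else 1) ((Pi.single m w : Fin k → V) i))
          = Pi.single m (ρ g w) := by
        funext i
        by_cases hi : i = m
        · subst hi; simp
        · simp [Pi.single_apply, hi]
      rw [harg] at h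
      have h2 := congrFun h m
      simp only [hTapply]
      rw [h2]
      simp
    have hTGsrc : ∀ m ℓ, m ≠ ℓ → ∀ (g : G) (w : V), T m ℓ (ρ g w) = T m ℓ w := by
      intro m ℓ hne g w
      have h := hG (fun i => if i = ℓ then g else 1) (Pi.single ℓ w)
      have harg : (fun i => ρ (if i = ℓ then g else 1) ((Pi.single ℓ w : Fin k → V) i))
          = Pi.single ℓ (ρ g w) := by
        funext i
        by_cases hi : i = ℓ
        · subst hi; simp
        · simp [Pi.single_apply, hi]
      rw [harg] at h
      have h2 := congrFun h m
      simp only [hTapply]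
      rw [h2, if_neg hne]
      simp
    have hTGtgt : ∀ m ℓ, m ≠ ℓ → ∀ (g : G) (w : V), ρ g (T m ℓ w) = T m ℓ w := by
      intro m ℓ hne g w
      have h := hG (fun i => if i = m then g else 1) (Pi.single ℓ w)
      have harg : (fun i => ρ (if i = m then g else 1) ((Pi.single ℓ w : Fin k → V) i))
          = Pi.single ℓ w := by
        funext i
        by_cases hi : i = ℓ
        · subst hi
          rw [if_neg (Ne.symm hne)]
          simp
        · simp [Pi.single_apply, hi]
      rw [harg] at h
      have h2 := congrFun h m
      simp only [hTapply]
      rw [if_pos rfl] at h2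
      exact h2.symm
    set z : Fin k := ⟨0, hk⟩ with hz
    set A : V →ₗ[ℝ] V := T z z with hA
    have hdiag : ∀ m, T m m = A := by
      intro m
      have := hTperm (Equiv.swap z m) z z
      rwa [Equiv.swap_apply_left] at this
    by_cases hk1 : k = 1
    · refine ⟨A, 0, fun g w => by rw [hA, hTGdiag], ?_⟩
      intro v m
      rw [hdecomp]
      subst hk1
      rw [Fin.sum_univ_one]
      have h0 : (0 : Fin 1) = m := Subsingleton.elim _ _
      rw [h0, hdiag m]
      simp
    · have hk2 : 1 < k := by omega
      set o : Fin k := ⟨1, hk2⟩ with ho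
      have hzo : z ≠ o := by
        simp [hz, ho, Fin.ext_iff]
      set B : V →ₗ[ℝ] V := T z o with hB
      have hoff : ∀ m ℓ, m ≠ ℓ → T m ℓ = B := by
        intro m ℓ hne
        set σ1 : Equiv.Perm (Fin k) := Equiv.swap m z with hσ1
        have hℓ1 : σ1 ℓ ≠ z := by
          intro hcon
          have : σ1 ℓ = σ1 m := by rw [hcon, hσ1, Equiv.swap_apply_left]
          exact hne.symm (σ1.injective this)
        set σ2 : Equiv.Perm (Fin k) := Equiv.swap (σ1 ℓ) o with hσ2
        have hτm : σ2 (σ1 m) = z := by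
          rw [hσ1, Equiv.swap_apply_left, hσ2, Equiv.swap_apply_of_ne_of_ne hℓ1.symm hzo]
        have hτℓ : σ2 (σ1 ℓ) = o := by rw [hσ2, Equiv.swap_apply_left]
        have := hTperm (σ2 * σ1) m ℓ
        rw [Equiv.Perm.mul_apply, Equiv.Perm.mul_apply, hτm, hτℓ] at this
        rw [← this, hB]
      have hsum : ∀ (v : Fin k → V) m, L v m = (A - B) (v m) + B (∑ ℓ, v ℓ) := by
        intro v m
        rw [hdecomp]
        have hterm : ∀ ℓ, T m ℓ (v ℓ) = B (v ℓ) + (if ℓ = m then A (v ℓ) - B (v ℓ) else 0) := by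
          intro ℓ
          by_cases h : ℓ = m
          · rw [h, hdiag m]
            simp
          · rw [hoff m ℓ (Ne.symm h), if_neg h, add_zero]
        simp only [hterm]
        rw [Finset.sum_add_distrib, Finset.sum_ite_eq' Finset.univ m]
        simp only [Finset.mem_univ, if_true, map_sum, LinearMap.sub_apply]
        abel
      have hB1 : ∀ (g : G) (w : V), B (ρ g w) = B w := fun g w => hTGsrc z o hzo g w
      have hB2 : ∀ (g : G) (w : V), ρ g (B w) = B w := fun g w => hTGtgt z o hzo g w
      obtain ⟨a, ha⟩ := factor_lemma ρ hinner s e he_indep he_span B hB1 hB2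
      refine ⟨A - B, a, ?_, ?_⟩
      · intro g w
        rw [LinearMap.sub_apply, LinearMap.sub_apply, map_sub, hB1, hA, hTGdiag, hB2]
      · intro v m
        rw [hsum, ha]
        congr 1
        refine Finset.sum_congr rfl fun i _ => Finset.sum_congr rfl fun j _ => ?_
        rw [sum_inner]
  · rintro ⟨Lhat, a, hLhat, hform⟩
    have he_mem : ∀ i, e i ∈ ρ.invariants := fun i =>
      he_span ▸ Submodule.subset_span (Set.mem_range_self i)
    have he_fix : ∀ (g : G) i, ρ g (e i) = e i := fun g i => (ρ.mem_invariants _).1 (he_mem i) g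
    have hinner_e : ∀ (g : G) (w : V) i, ⟪ρ g w, e i⟫ = ⟪w, e i⟫ := by
      intro g w i
      conv_lhs => rw [← he_fix g i]
      exact hinner g w (e i)
    constructor
    · intro g v
      funext m
      rw [hform, hform, hLhat, map_add, map_sum]
      congr 1
      refine Finset.sum_congr rfl fun i _ => ?_
      rw [map_sum]
      refine Finset.sum_congr rfl fun j _ => ?_
      rw [map_smul, map_smul, he_fix]
      simp only [hinner_e]
    · intro τ v
      funext m
      rw [hform, hform]
      have hs : ∀ i, (∑ ℓ, (⟪v (τ⁻¹ ℓ), e i⟫ : ℝ)) = ∑ ℓ, ⟪v ℓ, e i⟫ := fun i =>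
        Equiv.sum_comp τ⁻¹ (fun ℓ => ⟪v ℓ, e i⟫)
      simp only [hs]
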